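/- Fix t > 0 and c ≥ 0 with P(X ≥ c) > 0. Let τ(c) := inf{n ≥ 1 : Xₙ ≥ c} and W_c(t) := E[X_{τ(c)} 1(S_{τ(c)} ≤ t)]. Then W_c(t) = (1 − e^{−t·P(X ≥ c)})·E(X | X ≥ c), where E(X | X ≥ c) = E[X 1(X ≥ c)]/P(X ≥ c). -/

import Mathlib

open MeasureTheory ProbabilityTheory Real Set
open scoped ENNReal NNReal

noncomputable section

namespace ProphetPoisson

variable {Ω : Type*} [MeasurableSpace Ω]

/-- `arrival T k` is the arrival time `S_{k+1} = T₀ + ⋯ + T_k` of the `k`-th observation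
(observations are indexed by `k = 0, 1, 2, …`). -/
def arrival (T : ℕ → Ω → ℝ) (k : ℕ) (ω : Ω) : ℝ :=
  ∑ i ∈ Finset.range (k + 1), T i ω

/-- The maximum of all observations `X k` arriving by time `t`
(the maximum of an empty set being `0`); for nonnegative observations this is
`⨆ k, X k · 1(S k ≤ t)`. -/
def maxByT (X T : ℕ → Ω → ℝ) (t : ℝ) (ω : Ω) : ℝ :=
  ⨆ k : ℕ, if arrival T k ω ≤ t then X k ω else 0

/-- `M(t)`: the expected maximum of the observations arriving by time `t`. -/
def Mval (μ : Measure Ω) (X T : ℕ → Ω → ℝ) (t : ℝ) : ℝ :=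
  ∫ ω, maxByT X T t ω ∂μ

/-- The σ-algebra generated by `(X 0, S 0), …, (X i, S i)`. -/
def obsFiltration (X T : ℕ → Ω → ℝ) (i : ℕ) : MeasurableSpace Ω :=
  ⨆ j ∈ Finset.range (i + 1),
    MeasurableSpace.comap (fun ω => (X j ω, arrival T j ω)) inferInstance

/-- A stopping rule: an `ℕ`-valued random variable `τ` such that `{τ = i}` is
measurable w.r.t. the σ-algebra generated by `(X 0, S 0), …, (X i, S i)`. -/
def IsStopRule (X T : ℕ → Ω → ℝ) (τ : Ω → ℕ) : Prop :=
  ∀ i : ℕ, MeasurableSet[obsFiltration X T i] {ω | τ ω = i}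

/-- The reward `X_τ · 1(S_τ ≤ t)` of a stopping rule `τ`. -/
def stopReward (X T : ℕ → Ω → ℝ) (t : ℝ) (τ : Ω → ℕ) (ω : Ω) : ℝ :=
  if arrival T (τ ω) ω ≤ t then X (τ ω) ω else 0

/-- `V(t)`: the optimal stopping value `sup_τ E[X_τ 1(S_τ ≤ t)]`. -/
def Vval (μ : Measure Ω) (X T : ℕ → Ω → ℝ) (t : ℝ) : ℝ :=
  sSup {v | ∃ τ : Ω → ℕ, IsStopRule X T τ ∧ v = ∫ ω, stopReward X T t τ ω ∂μ}

/-- The threshold rule `τ(c) = inf {n : X n ≥ c}`. -/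
def tauC (X : ℕ → Ω → ℝ) (c : ℝ) (ω : Ω) : ℕ := sInf {n : ℕ | c ≤ X n ω}

/-- `W_c(t)`: the expected reward of the threshold rule `τ(c)`. -/
def Wval (μ : Measure Ω) (X T : ℕ → Ω → ℝ) (c t : ℝ) : ℝ :=
  ∫ ω, stopReward X T t (tauC X c) ω ∂μ

/-- `sup_{c ≥ 0} W_c(t)`. -/
def supW (μ : Measure Ω) (X T : ℕ → Ω → ℝ) (t : ℝ) : ℝ :=
  sSup {w | ∃ c : ℝ, 0 ≤ c ∧ w = Wval μ X T c t}

/-- The basic probabilistic setup: `μ` is a probability measure; the `X k` are i.i.d.;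
the `T k` are i.i.d. exponential with rate `1`; and all of the `X k, T k` are jointly
independent (in particular the sequence `{X k}` is independent of the arrival process). -/
structure Setup (μ : Measure Ω) (X T : ℕ → Ω → ℝ) : Prop where
  prob : IsProbabilityMeasure μ
  measX : ∀ i, Measurable (X i)
  measT : ∀ i, Measurable (T i)
  indep : iIndepFun (Sum.elim X T) μ
  identX : ∀ i, μ.map (X i) = μ.map (X 0)
  expT : ∀ i, μ.map (T i) = expMeasure 1

end ProphetPoisson

namespace PPAux

open ProphetPoisson


/-- CDF of Gamma(n+1,1). -/
def auxF (n : ℕ) (u : ℝ) : ℝ :=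
  if 0 ≤ u then 1 - Real.exp (-u) * ∑ k ∈ Finset.range (n + 1), u ^ k / k.factorial else 0

lemma auxF_nonneg (n : ℕ) (u : ℝ) : 0 ≤ auxF n u := by
  unfold auxF
  split_ifs with h
  · have h1 : ∑ k ∈ Finset.range (n + 1), u ^ k / k.factorial ≤ Real.exp u :=
      Real.sum_le_exp_of_nonneg h _
    have h2 : Real.exp (-u) * ∑ k ∈ Finset.range (n + 1), u ^ k / k.factorial ≤
        Real.exp (-u) * Real.exp u := by
      exact mul_le_mul_of_nonneg_left h1 (Real.exp_nonneg _)
    rw [← Real.exp_add] at h2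
    simp at h2
    linarith
  · exact le_refl _

lemma auxF_le_one (n : ℕ) (u : ℝ) : auxF n u ≤ 1 := by
  unfold auxF
  split_ifs with h
  · have : 0 ≤ Real.exp (-u) * ∑ k ∈ Finset.range (n + 1), u ^ k / k.factorial := by
      apply mul_nonneg (Real.exp_nonneg _)
      apply Finset.sum_nonneg
      intro k _
      positivity
    linarith
  · norm_num

lemma measurable_auxF (n : ℕ) : Measurable (auxF n) := by
  unfold auxF
  apply Measurable.ite measurableSet_Ici
  · fun_prop
  · measurability


lemma auxF_zero (n : ℕ) : auxF n 0 = 0 := by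
  unfold auxF
  rw [if_pos le_rfl]
  rw [Finset.sum_eq_single 0]
  · simp
  · intro k _ hk
    simp [zero_pow hk]
  · simp

lemma auxF_of_neg (n : ℕ) {u : ℝ} (hu : u < 0) : auxF n u = 0 := by
  unfold auxF; rw [if_neg (not_le.mpr hu)]

lemma integrableOn_exp_neg_Ici : IntegrableOn (fun b : ℝ => rexp (-b)) (Ici 0) := by
  have := exp_neg_integrableOn_Ioi (0 : ℝ) (zero_lt_one)
  simp only [neg_one_mul] at this
  rwa [integrableOn_Ici_iff_integrableOn_Ioi]

lemma auxF_step (n : ℕ) (t : ℝ) :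
    ∫⁻ b, exponentialPDF 1 b * ENNReal.ofReal (auxF n (t - b)) =
      ENNReal.ofReal (auxF (n + 1) t) := by
  have hmeas : Measurable fun b : ℝ => (Ici (0:ℝ)).indicator (fun b => rexp (-b)) b * auxF n (t - b) := by
    apply Measurable.mul
    · exact (Real.measurable_exp.comp measurable_neg).indicator measurableSet_Ici
    · exact (measurable_auxF n).comp (measurable_const.sub measurable_id)
  have hnn : ∀ b : ℝ, 0 ≤ (Ici (0:ℝ)).indicator (fun b => rexp (-b)) b * auxF n (t - b) := by
    intro b
    apply mul_nonneg _ (auxF_nonneg _ _)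
    apply Set.indicator_nonneg
    intro x _; exact (Real.exp_nonneg _)
  have hint : Integrable (fun b : ℝ => (Ici (0:ℝ)).indicator (fun b => rexp (-b)) b * auxF n (t - b)) := by
    apply Integrable.mono' ((integrable_indicator_iff measurableSet_Ici).mpr integrableOn_exp_neg_Ici)
      hmeas.aestronglyMeasurable
    refine Filter.Eventually.of_forall fun b => ?_
    rw [Real.norm_eq_abs, abs_of_nonneg (hnn b)]
    calc (Ici (0:ℝ)).indicator (fun b => rexp (-b)) b * auxF n (t - b)
        ≤ (Ici (0:ℝ)).indicator (fun b => rexp (-b)) b * 1 := by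
          apply mul_le_mul_of_nonneg_left (auxF_le_one _ _)
          apply Set.indicator_nonneg; intro x _; exact (Real.exp_nonneg _)
      _ = (Ici (0:ℝ)).indicator (fun b => rexp (-b)) b := mul_one _
  have heq : ∀ b : ℝ, exponentialPDF 1 b * ENNReal.ofReal (auxF n (t - b)) =
      ENNReal.ofReal ((Ici (0:ℝ)).indicator (fun b => rexp (-b)) b * auxF n (t - b)) := by
    intro b
    rw [exponentialPDF_eq, ENNReal.ofReal_mul]
    · congr 1
      simp only [Set.indicator, mem_Ici, one_mul]
    · simp only [Set.indicator, mem_Ici]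
      split_ifs with h
      · positivity
      · exact le_rfl
  simp_rw [heq]
  rw [← ofReal_integral_eq_lintegral_ofReal hint (Filter.Eventually.of_forall hnn)]
  congr 1
  -- now a real integral computation
  have hind : (fun b : ℝ => (Ici (0:ℝ)).indicator (fun b => rexp (-b)) b * auxF n (t - b)) =
      (Ici (0:ℝ)).indicator (fun b => rexp (-b) * auxF n (t - b)) := by
    ext b
    simp only [Set.indicator]
    split_ifs <;> simp
  rw [hind, integral_indicator measurableSet_Ici, integral_Ici_eq_integral_Ioi]
  rcases lt_or_ge t 0 with ht | ht
  · rw [auxF_of_neg _ ht]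
    rw [setIntegral_congr_fun measurableSet_Ioi (g := fun _ => (0:ℝ))]
    · simp
    · intro b hb
      simp only [mem_Ioi] at hb
      have hneg : t - b < 0 := by linarith
      simp [auxF_of_neg n hneg]
  · -- split Ioi 0 = Ioc 0 t ∪ Ioi t
    have hsplit : Ioi (0:ℝ) = Ioc 0 t ∪ Ioi t := (Set.Ioc_union_Ioi_eq_Ioi ht).symm
    have hintOn : IntegrableOn (fun b : ℝ => rexp (-b) * auxF n (t - b)) (Ici 0) := by
      rw [← integrable_indicator_iff measurableSet_Ici, ← hind]
      exact hint
    rw [hsplit, setIntegral_union (Set.Ioc_disjoint_Ioi le_rfl) measurableSet_Ioi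
      (hintOn.mono_set (fun x hx => le_of_lt hx.1))
      (hintOn.mono_set (fun x hx => ht.trans (le_of_lt hx)))]
    have h2 : ∫ b in Ioi t, rexp (-b) * auxF n (t - b) = 0 := by
      rw [setIntegral_congr_fun measurableSet_Ioi (g := fun _ => (0:ℝ))]
      · simp
      · intro b hb
        simp only [mem_Ioi] at hb
        have hneg : t - b < 0 := by linarith
        simp [auxF_of_neg n hneg]
    rw [h2, add_zero, ← intervalIntegral.integral_of_le ht]
    have hcongr : ∀ b ∈ uIcc (0:ℝ) t, rexp (-b) * auxF n (t - b) =
        rexp (-b) - rexp (-t) * ∑ k ∈ Finset.range (n + 1), (t - b) ^ k / k.factorial := by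
      intro b hb
      rw [uIcc_of_le ht] at hb
      obtain ⟨hb0, hbt⟩ := hb
      unfold auxF
      rw [if_pos (by linarith)]
      rw [mul_sub, mul_one, ← mul_assoc, ← Real.exp_add]
      ring_nf
    rw [intervalIntegral.integral_congr hcongr]
    have c1 : Continuous fun b : ℝ => rexp (-b) := by fun_prop
    have c2 : Continuous fun b : ℝ => rexp (-t) * ∑ k ∈ Finset.range (n + 1), (t - b) ^ k / k.factorial := by
      fun_prop
    rw [intervalIntegral.integral_sub (c1.intervalIntegrable _ _) (c2.intervalIntegrable _ _)]
    have e1 : ∫ b in (0:ℝ)..t, rexp (-b) = 1 - rexp (-t) := by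
      have := intervalIntegral.integral_comp_neg (a := (0:ℝ)) (b := t) (fun x => rexp x)
      rw [this, integral_exp]
      simp only [neg_zero, Real.exp_zero]
    have e2 : ∫ b in (0:ℝ)..t, rexp (-t) * ∑ k ∈ Finset.range (n + 1), (t - b) ^ k / k.factorial
        = rexp (-t) * ∑ k ∈ Finset.range (n + 1), t ^ (k+1) / (k+1).factorial := by
      rw [intervalIntegral.integral_const_mul]
      congr 1
      rw [intervalIntegral.integral_finset_sum]
      · apply Finset.sum_congr rfl
        intro k _
        have hrfl : (∫ b in (0:ℝ)..t, (t - b) ^ k / (k.factorial : ℝ))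
            = ∫ b in (0:ℝ)..t, (fun x : ℝ => x ^ k / k.factorial) (t - b) := rfl
        rw [hrfl, intervalIntegral.integral_comp_sub_left (fun x : ℝ => x ^ k / k.factorial) t]
        simp only [sub_self, sub_zero]
        rw [intervalIntegral.integral_div, integral_pow]
        rw [Nat.factorial_succ]
        push_cast
        field_simp
        simp
      · intro k _
        apply Continuous.intervalIntegrable
        fun_prop
    rw [e1, e2]
    unfold auxF
    rw [if_pos ht]
    rw [Finset.sum_range_succ' (fun k => t ^ k / (k.factorial : ℝ)) (n+1)]
    simp only [pow_zero, Nat.factorial_zero, Nat.cast_one]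
    ring



lemma series_eval {pr t : ℝ} (hp0 : 0 < pr) (hp1 : pr ≤ 1) (ht : 0 ≤ t) :
    ∑' n : ℕ, (1 - pr) ^ n * auxF n t = (1 - Real.exp (-(t * pr))) / pr := by
  set q := 1 - pr with hq
  have hq0 : 0 ≤ q := by simp [hq]; linarith
  have hq1 : q < 1 := by simp [hq]; linarith
  set σ : ℕ → ℝ := fun n => ∑ k ∈ Finset.range (n + 1), t ^ k / k.factorial with hσ
  have hσnn : ∀ n, 0 ≤ σ n := fun n => Finset.sum_nonneg fun k _ => by positivity
  have hσle : ∀ n, σ n ≤ Real.exp t := fun n => Real.sum_le_exp_of_nonneg ht _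
  have hauxF : ∀ n, auxF n t = 1 - Real.exp (-t) * σ n := fun n => if_pos ht
  have s1 : Summable fun n : ℕ => q ^ n := summable_geometric_of_lt_one hq0 hq1
  have s2 : Summable fun n : ℕ => q ^ n * σ n := by
    apply Summable.of_nonneg_of_le (fun n => mul_nonneg (pow_nonneg hq0 n) (hσnn n))
      (fun n => mul_le_mul_of_nonneg_left (hσle n) (pow_nonneg hq0 n))
    exact s1.mul_right _
  -- Cauchy product: ∑ q^n σ n = exp (q * t) / pr
  have hcauchy : ∑' n : ℕ, q ^ n * σ n = Real.exp (q * t) * (1 / pr) := by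
    have hf : Summable fun k : ℕ => ‖(q * t) ^ k / k.factorial‖ := by
      apply Summable.congr (Real.summable_pow_div_factorial (q * t)).abs
      intro k; rw [Real.norm_eq_abs]
    have hg : Summable fun m : ℕ => ‖q ^ m‖ := by
      apply Summable.congr s1.abs
      intro k; rw [Real.norm_eq_abs]
    have := tsum_mul_tsum_eq_tsum_sum_range_of_summable_norm hf hg
    have hexp : ∑' k : ℕ, (q * t) ^ k / (k.factorial : ℝ) = Real.exp (q * t) := by
      rw [Real.exp_eq_exp_ℝ, NormedSpace.exp_eq_tsum_div]
    have hgeom : ∑' m : ℕ, q ^ m = 1 / (1 - q) := by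
      rw [tsum_geometric_of_lt_one hq0 hq1, one_div]
    rw [hexp, hgeom] at this
    have hterm : ∀ n : ℕ, ∑ k ∈ Finset.range (n + 1), (q * t) ^ k / (k.factorial : ℝ) * q ^ (n - k)
        = q ^ n * σ n := by
      intro n
      rw [hσ, Finset.mul_sum]
      apply Finset.sum_congr rfl
      intro k hk
      rw [Finset.mem_range] at hk
      have hkn : k ≤ n := Nat.lt_succ_iff.mp hk
      have hqq : q ^ k * q ^ (n - k) = q ^ n := by
        rw [← pow_add, Nat.add_sub_cancel' hkn]
      calc (q * t) ^ k / (k.factorial : ℝ) * q ^ (n - k)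
          = (q ^ k * q ^ (n - k)) * (t ^ k / k.factorial) := by rw [mul_pow]; ring
        _ = q ^ n * (t ^ k / k.factorial) := by rw [hqq]
    have h1q : (1 : ℝ) - q = pr := by rw [hq]; ring
    rw [h1q] at this
    rw [← tsum_congr hterm]
    exact this.symm
  -- final
  have s3 : Summable fun n : ℕ => q ^ n * auxF n t := by
    apply Summable.congr (f := fun n => q ^ n - Real.exp (-t) * (q ^ n * σ n))
    · exact (s1.sub (s2.mul_left _))
    · intro n; rw [hauxF n]; ring
  calc ∑' n : ℕ, q ^ n * auxF n t
      = ∑' n : ℕ, (q ^ n - Real.exp (-t) * (q ^ n * σ n)) := by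
        apply tsum_congr; intro n; rw [hauxF n]; ring
    _ = (∑' n : ℕ, q ^ n) - ∑' n : ℕ, Real.exp (-t) * (q ^ n * σ n) := by
        rw [Summable.tsum_sub s1 (s2.mul_left _)]
    _ = (1 - q)⁻¹ - Real.exp (-t) * (Real.exp (q * t) * (1 / pr)) := by
        rw [tsum_geometric_of_lt_one hq0 hq1, tsum_mul_left, hcauchy]
    _ = (1 - Real.exp (-(t * pr))) / pr := by
        have h1q : (1 : ℝ) - q = pr := by rw [hq]; ring
        have h2 : Real.exp (-t) * (Real.exp (q * t) * (1 / pr)) =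
            Real.exp (-t + q * t) * (1 / pr) := by rw [Real.exp_add]; ring
        have h3 : -t + q * t = -(t * pr) := by rw [hq]; ring
        rw [h1q, h2, h3]
        field_simp


variable {Ω : Type*} [MeasurableSpace Ω] {μ : Measure Ω} {X T : ℕ → Ω → ℝ}

lemma measElim (hX : ∀ i, Measurable (X i)) (hT : ∀ i, Measurable (T i)) :
    ∀ i : ℕ ⊕ ℕ, Measurable (Sum.elim X T i) := by
  intro i
  cases i with
  | inl j => exact hX j
  | inr j => exact hT j

lemma measurable_arrival (hT : ∀ i, Measurable (T i)) (n : ℕ) : Measurable (arrival T n) := by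
  unfold arrival
  exact Finset.measurable_sum _ (fun i _ => hT i)

section IndepHelpers

variable (c t : ℝ) (n : ℕ)

/-- first grouping: `(X j)_{j ≤ n}` is independent of `(T i)_{i ≤ n}`. -/
lemma indepXT (hsetup : Setup μ X T) :
    IndepFun (fun ω (i : ((Finset.range (n+1)).image Sum.inl : Finset (ℕ ⊕ ℕ))) => Sum.elim X T i.1 ω)
      (fun ω (i : ((Finset.range (n+1)).image Sum.inr : Finset (ℕ ⊕ ℕ))) => Sum.elim X T i.1 ω) μ := by
  apply hsetup.indep.indepFun_finset _ _ _ (measElim hsetup.measX hsetup.measT)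
  rw [Finset.disjoint_left]
  intro a ha hb
  rcases Finset.mem_image.mp ha with ⟨x, _, rfl⟩
  rcases Finset.mem_image.mp hb with ⟨y, _, h⟩
  exact Sum.inr_ne_inl h

/-- second grouping: `(X j)_{j < n}` is independent of `X n`. -/
lemma indepXX (hsetup : Setup μ X T) :
    IndepFun (fun ω (i : ((Finset.range n).image Sum.inl : Finset (ℕ ⊕ ℕ))) => Sum.elim X T i.1 ω)
      (fun ω (i : (({Sum.inl n} : Finset (ℕ ⊕ ℕ)))) => Sum.elim X T i.1 ω) μ := by
  apply hsetup.indep.indepFun_finset _ _ _ (measElim hsetup.measX hsetup.measT)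
  rw [Finset.disjoint_right]
  intro a ha hb
  rw [Finset.mem_singleton] at ha
  subst ha
  rcases Finset.mem_image.mp hb with ⟨x, hx, h⟩
  have : x = n := Sum.inl.inj h
  subst this
  exact absurd (Finset.mem_range.mp hx) (lt_irrefl _)

/-- `T (n+1)` is independent of `arrival T n`. -/
lemma indepT_arrival (hsetup : Setup μ X T) : IndepFun (T (n+1)) (arrival T n) μ := by
  have base := hsetup.indep.indepFun_finset {Sum.inr (n+1)}
    ((Finset.range (n+1)).image Sum.inr) (by
      rw [Finset.disjoint_left]
      intro a ha hb
      rw [Finset.mem_singleton] at ha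
      subst ha
      rcases Finset.mem_image.mp hb with ⟨x, hx, h⟩
      have : x = n + 1 := Sum.inr.inj h
      subst this
      exact absurd (Finset.mem_range.mp hx) (lt_irrefl _))
    (measElim hsetup.measX hsetup.measT)
  have hφ : Measurable fun w : (({Sum.inr (n+1)} : Finset (ℕ ⊕ ℕ))) → ℝ =>
      w ⟨Sum.inr (n+1), Finset.mem_singleton_self _⟩ := measurable_pi_apply _
  have hψ : Measurable fun w : (((Finset.range (n+1)).image Sum.inr : Finset (ℕ ⊕ ℕ))) → ℝ =>
      ∑ j ∈ (Finset.range (n+1)).attach, w ⟨Sum.inr j.1, Finset.mem_image_of_mem _ j.2⟩ :=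
    Finset.measurable_sum _ (fun j _ => measurable_pi_apply _)
  have h := base.comp hφ hψ
  have h2 : ((fun w : (((Finset.range (n+1)).image Sum.inr : Finset (ℕ ⊕ ℕ))) → ℝ =>
      ∑ j ∈ (Finset.range (n+1)).attach, w ⟨Sum.inr j.1, Finset.mem_image_of_mem _ j.2⟩) ∘
      (fun a (i : (((Finset.range (n+1)).image Sum.inr : Finset (ℕ ⊕ ℕ)))) => Sum.elim X T i.1 a))
      = arrival T n := by
    funext ω
    show (∑ j ∈ (Finset.range (n+1)).attach, T j.1 ω) = arrival T n ω
    rw [arrival, Finset.sum_attach (Finset.range (n+1)) (fun j => T j ω)]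
  exact h2 ▸ h

end IndepHelpers

lemma expMeasure_Iic (t : ℝ) : expMeasure 1 (Iic t) = ENNReal.ofReal (auxF 0 t) := by
  rw [expMeasure, gammaMeasure, withDensity_apply _ measurableSet_Iic]
  have hpdf : gammaPDF 1 1 = exponentialPDF 1 := rfl
  rw [hpdf, lintegral_exponentialPDF_eq_antiDeriv zero_lt_one]
  congr 1
  unfold auxF
  split_ifs with h
  · simp [Finset.sum_range_one]
  · rfl

lemma arrival_cdf (hsetup : Setup μ X T) (n : ℕ) (t : ℝ) :
    μ {ω | arrival T n ω ≤ t} = ENNReal.ofReal (auxF n t) := by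
  haveI := hsetup.prob
  induction n generalizing t with
  | zero =>
    have h0 : {ω | arrival T 0 ω ≤ t} = T 0 ⁻¹' Iic t := by
      ext ω
      simp [arrival, Finset.sum_range_one]
    rw [h0, ← Measure.map_apply (hsetup.measT 0) measurableSet_Iic, hsetup.expT 0,
      expMeasure_Iic]
  | succ n ih =>
    have hpair := indepT_arrival n hsetup
    haveI : IsProbabilityMeasure (μ.map (arrival T n)) :=
      Measure.isProbabilityMeasure_map (measurable_arrival hsetup.measT n).aemeasurable
    have hmap : μ.map (fun ω => (T (n+1) ω, arrival T n ω)) =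
        (expMeasure 1).prod (μ.map (arrival T n)) := by
      rw [← hsetup.expT (n+1)]
      exact (indepFun_iff_map_prod_eq_prod_map_map (hsetup.measT (n+1)).aemeasurable
        (measurable_arrival hsetup.measT n).aemeasurable).mp hpair
    have hsetE : {ω | arrival T (n+1) ω ≤ t} =
        (fun ω => (T (n+1) ω, arrival T n ω)) ⁻¹' {p : ℝ × ℝ | p.1 + p.2 ≤ t} := by
      ext ω
      have : arrival T (n+1) ω = T (n+1) ω + arrival T n ω := by
        rw [arrival, arrival, Finset.sum_range_succ]
        ring
      simp [this]
    have hmeasset : MeasurableSet {p : ℝ × ℝ | p.1 + p.2 ≤ t} :=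
      measurableSet_le (measurable_fst.add measurable_snd) measurable_const
    rw [hsetE, ← Measure.map_apply ((hsetup.measT (n+1)).prodMk
      (measurable_arrival hsetup.measT n)) hmeasset, hmap, Measure.prod_apply hmeasset]
    have hfib : ∀ b : ℝ, (Prod.mk b ⁻¹' {p : ℝ × ℝ | p.1 + p.2 ≤ t}) = Iic (t - b) := by
      intro b
      ext a
      simp only [mem_preimage, mem_setOf_eq, mem_Iic]
      constructor <;> intro <;> linarith
    have hfib2 : ∀ b : ℝ, (μ.map (arrival T n)) (Iic (t - b)) = ENNReal.ofReal (auxF n (t - b)) := by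
      intro b
      rw [Measure.map_apply (measurable_arrival hsetup.measT n) measurableSet_Iic]
      exact ih (t - b)
    simp_rw [hfib, hfib2]
    rw [expMeasure, gammaMeasure]
    have hg : Measurable fun b : ℝ => ENNReal.ofReal (auxF n (t - b)) :=
      Measurable.ennreal_ofReal ((measurable_auxF n).comp (measurable_const.sub measurable_id))
    have hf : Measurable (gammaPDF 1 1) := (measurable_gammaPDFReal 1 1).ennreal_ofReal
    rw [lintegral_withDensity_eq_lintegral_mul _ hf hg]
    calc ∫⁻ b, (gammaPDF 1 1 * fun b => ENNReal.ofReal (auxF n (t - b))) b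
        = ∫⁻ b, exponentialPDF 1 b * ENNReal.ofReal (auxF n (t - b)) := by
          apply lintegral_congr
          intro b
          rfl
      _ = ENNReal.ofReal (auxF (n+1) t) := auxF_step n t

section Layer

lemma prod_indicator_eq (s : Finset ℕ) (f : ℕ → Ω → ℝ) (E : Set ℝ) (ω : Ω) :
    (∏ j ∈ s, E.indicator (fun _ => (1:ℝ≥0∞)) (f j ω)) =
      (⋂ j ∈ s, f j ⁻¹' E).indicator (fun _ => (1:ℝ≥0∞)) ω := by
  by_cases h : ω ∈ ⋂ j ∈ s, f j ⁻¹' E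
  · rw [Set.indicator_of_mem h]
    apply Finset.prod_eq_one
    intro j hj
    have hm : f j ω ∈ E := by
      rw [Set.mem_iInter₂] at h
      exact h j hj
    rw [Set.indicator_of_mem hm]
  · rw [Set.indicator_of_notMem h]
    rw [Set.mem_iInter₂] at h
    push_neg at h
    obtain ⟨j, hj, hnot⟩ := h
    have hnot' : f j ω ∉ E := hnot
    exact Finset.prod_eq_zero hj (Set.indicator_of_notMem hnot' _)

lemma layer_eq (hsetup : Setup μ X T) (c t : ℝ) (n : ℕ) :
    ∫⁻ ω in ((⋂ j ∈ Finset.range n, X j ⁻¹' Iio c) ∩ X n ⁻¹' Ici c) ∩ {ω | arrival T n ω ≤ t},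
        ENNReal.ofReal (X n ω) ∂μ
      = ((μ.map (X 0)) (Iio c)) ^ n * (∫⁻ ω, (Ici c).indicator ENNReal.ofReal (X 0 ω) ∂μ) *
        ENNReal.ofReal (auxF n t) := by
  set u1 : Ω → ℝ≥0∞ := fun ω => ∏ j ∈ Finset.range n, (Iio c).indicator (fun _ => (1:ℝ≥0∞)) (X j ω) with hu1
  set u2 : Ω → ℝ≥0∞ := fun ω => (Ici c).indicator ENNReal.ofReal (X n ω) with hu2
  set v : Ω → ℝ≥0∞ := fun ω => (Iic t).indicator (fun _ => (1:ℝ≥0∞)) (arrival T n ω) with hv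
  have hu1meas : Measurable u1 :=
    Finset.measurable_prod _ fun j _ =>
      (measurable_const.indicator measurableSet_Iio).comp (hsetup.measX j)
  have hu2meas : Measurable u2 :=
    (ENNReal.measurable_ofReal.indicator measurableSet_Ici).comp (hsetup.measX n)
  have hvmeas : Measurable v :=
    (measurable_const.indicator measurableSet_Iic).comp (measurable_arrival hsetup.measT n)
  have hAmeas : MeasurableSet ((⋂ j ∈ Finset.range n, X j ⁻¹' Iio c) ∩ X n ⁻¹' Ici c) := by
    apply MeasurableSet.inter
    · exact MeasurableSet.biInter (Finset.range n).countable_toSet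
        (fun j _ => hsetup.measX j measurableSet_Iio)
    · exact hsetup.measX n measurableSet_Ici
  have hBmeas : MeasurableSet {ω | arrival T n ω ≤ t} :=
    measurableSet_le (measurable_arrival hsetup.measT n) measurable_const
  -- pointwise identity
  have hpoint : ∀ ω, u1 ω * u2 ω * v ω =
      (((⋂ j ∈ Finset.range n, X j ⁻¹' Iio c) ∩ X n ⁻¹' Ici c) ∩
        {ω | arrival T n ω ≤ t}).indicator (fun ω => ENNReal.ofReal (X n ω)) ω := by
    intro ω
    simp only [hu1, hu2, hv, prod_indicator_eq]
    by_cases h1 : ω ∈ ⋂ j ∈ Finset.range n, X j ⁻¹' Iio c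
    · by_cases h2 : c ≤ X n ω
      · by_cases h3 : arrival T n ω ≤ t
        · rw [Set.indicator_of_mem h1, Set.indicator_of_mem (show X n ω ∈ Ici c from h2),
            Set.indicator_of_mem (show arrival T n ω ∈ Iic t from h3),
            Set.indicator_of_mem (show ω ∈ ((⋂ j ∈ Finset.range n, X j ⁻¹' Iio c) ∩
              X n ⁻¹' Ici c) ∩ {ω | arrival T n ω ≤ t} from ⟨⟨h1, h2⟩, h3⟩)]
          simp
        · rw [Set.indicator_of_notMem (show arrival T n ω ∉ Iic t from h3),
            Set.indicator_of_notMem (show ω ∉ ((⋂ j ∈ Finset.range n, X j ⁻¹' Iio c) ∩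
              X n ⁻¹' Ici c) ∩ {ω | arrival T n ω ≤ t} from fun hmem => h3 hmem.2)]
          simp
      · rw [Set.indicator_of_notMem (show X n ω ∉ Ici c from h2),
          Set.indicator_of_notMem (show ω ∉ ((⋂ j ∈ Finset.range n, X j ⁻¹' Iio c) ∩
            X n ⁻¹' Ici c) ∩ {ω | arrival T n ω ≤ t} from fun hmem => h2 hmem.1.2)]
        simp
    · rw [Set.indicator_of_notMem h1,
        Set.indicator_of_notMem (show ω ∉ ((⋂ j ∈ Finset.range n, X j ⁻¹' Iio c) ∩
          X n ⁻¹' Ici c) ∩ {ω | arrival T n ω ≤ t} from fun hmem => h1 hmem.1.1)]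
      simp
  -- independence of (u1 * u2) and v
  have hindepUV : IndepFun (fun ω => u1 ω * u2 ω) v μ := by
    have base := indepXT n hsetup
    have hφ : Measurable fun w : ((((Finset.range (n+1)).image Sum.inl : Finset (ℕ ⊕ ℕ)))) → ℝ =>
        (∏ j ∈ (Finset.range n).attach, (Iio c).indicator (fun _ => (1:ℝ≥0∞))
          (w ⟨Sum.inl j.1, Finset.mem_image_of_mem _
            (Finset.mem_range.mpr (Nat.lt_succ_of_lt (Finset.mem_range.mp j.2)))⟩)) *
          (Ici c).indicator ENNReal.ofReal (w ⟨Sum.inl n, Finset.mem_image_of_mem _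
            (Finset.mem_range.mpr (Nat.lt_succ_self n))⟩) := by
      apply Measurable.mul
      · exact Finset.measurable_prod _ fun j _ =>
          (measurable_const.indicator measurableSet_Iio).comp (measurable_pi_apply _)
      · exact (ENNReal.measurable_ofReal.indicator measurableSet_Ici).comp (measurable_pi_apply _)
    have hψ : Measurable fun w : ((((Finset.range (n+1)).image Sum.inr : Finset (ℕ ⊕ ℕ)))) → ℝ =>
        (Iic t).indicator (fun _ => (1:ℝ≥0∞))
          (∑ j ∈ (Finset.range (n+1)).attach, w ⟨Sum.inr j.1, Finset.mem_image_of_mem _ j.2⟩) :=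
      (measurable_const.indicator measurableSet_Iic).comp
        (Finset.measurable_sum _ fun j _ => by apply measurable_pi_apply)
    have h := base.comp hφ hψ
    have e1 : ((fun w : ((((Finset.range (n+1)).image Sum.inl : Finset (ℕ ⊕ ℕ)))) → ℝ =>
        (∏ j ∈ (Finset.range n).attach, (Iio c).indicator (fun _ => (1:ℝ≥0∞))
          (w ⟨Sum.inl j.1, Finset.mem_image_of_mem _
            (Finset.mem_range.mpr (Nat.lt_succ_of_lt (Finset.mem_range.mp j.2)))⟩)) *
          (Ici c).indicator ENNReal.ofReal (w ⟨Sum.inl n, Finset.mem_image_of_mem _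
            (Finset.mem_range.mpr (Nat.lt_succ_self n))⟩)) ∘
        (fun ω (i : ((Finset.range (n+1)).image Sum.inl : Finset (ℕ ⊕ ℕ))) => Sum.elim X T i.1 ω))
        = fun ω => u1 ω * u2 ω := by
      funext ω
      show (∏ j ∈ (Finset.range n).attach, (Iio c).indicator (fun _ => (1:ℝ≥0∞)) (X j.1 ω)) *
        (Ici c).indicator ENNReal.ofReal (X n ω) = u1 ω * u2 ω
      rw [hu1, hu2]
      congr 1
      exact Finset.prod_attach (Finset.range n) fun j => (Iio c).indicator (fun _ => (1:ℝ≥0∞)) (X j ω)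
    have e2 : ((fun w : ((((Finset.range (n+1)).image Sum.inr : Finset (ℕ ⊕ ℕ)))) → ℝ =>
        (Iic t).indicator (fun _ => (1:ℝ≥0∞))
          (∑ j ∈ (Finset.range (n+1)).attach, w ⟨Sum.inr j.1, Finset.mem_image_of_mem _ j.2⟩)) ∘
        (fun ω (i : ((Finset.range (n+1)).image Sum.inr : Finset (ℕ ⊕ ℕ))) => Sum.elim X T i.1 ω))
        = v := by
      funext ω
      show (Iic t).indicator (fun _ => (1:ℝ≥0∞))
        (∑ j ∈ (Finset.range (n+1)).attach, T j.1 ω) = v ω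
      rw [hv, Finset.sum_attach (Finset.range (n+1)) (fun j => T j ω)]
      rfl
    rw [e1, e2] at h
    exact h
  -- independence of u1 and u2
  have hindepU12 : IndepFun u1 u2 μ := by
    have base := indepXX n hsetup
    have hφ : Measurable fun w : ((((Finset.range n).image Sum.inl : Finset (ℕ ⊕ ℕ)))) → ℝ =>
        ∏ j ∈ (Finset.range n).attach, (Iio c).indicator (fun _ => (1:ℝ≥0∞))
          (w ⟨Sum.inl j.1, Finset.mem_image_of_mem _ j.2⟩) :=
      Finset.measurable_prod _ fun j _ =>
        (measurable_const.indicator measurableSet_Iio).comp (measurable_pi_apply _)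
    have hψ : Measurable fun w : (({Sum.inl n} : Finset (ℕ ⊕ ℕ))) → ℝ =>
        (Ici c).indicator ENNReal.ofReal (w ⟨Sum.inl n, Finset.mem_singleton_self _⟩) :=
      (ENNReal.measurable_ofReal.indicator measurableSet_Ici).comp (measurable_pi_apply _)
    have h := base.comp hφ hψ
    have e1 : ((fun w : ((((Finset.range n).image Sum.inl : Finset (ℕ ⊕ ℕ)))) → ℝ =>
        ∏ j ∈ (Finset.range n).attach, (Iio c).indicator (fun _ => (1:ℝ≥0∞))
          (w ⟨Sum.inl j.1, Finset.mem_image_of_mem _ j.2⟩)) ∘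
        (fun ω (i : ((Finset.range n).image Sum.inl : Finset (ℕ ⊕ ℕ))) => Sum.elim X T i.1 ω))
        = u1 := by
      funext ω
      show (∏ j ∈ (Finset.range n).attach, (Iio c).indicator (fun _ => (1:ℝ≥0∞)) (X j.1 ω)) = u1 ω
      rw [hu1]
      exact Finset.prod_attach (Finset.range n) fun j => (Iio c).indicator (fun _ => (1:ℝ≥0∞)) (X j ω)
    have e2 : ((fun w : (({Sum.inl n} : Finset (ℕ ⊕ ℕ))) → ℝ =>
        (Ici c).indicator ENNReal.ofReal (w ⟨Sum.inl n, Finset.mem_singleton_self _⟩)) ∘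
        (fun ω (i : (({Sum.inl n} : Finset (ℕ ⊕ ℕ)))) => Sum.elim X T i.1 ω)) = u2 := rfl
    rw [e1, e2] at h
    exact h
  -- compute the three lintegrals
  have hu1int : ∫⁻ ω, u1 ω ∂μ = ((μ.map (X 0)) (Iio c)) ^ n := by
    have h1 : ∫⁻ ω, u1 ω ∂μ = μ (⋂ j ∈ Finset.range n, X j ⁻¹' Iio c) := by
      rw [hu1]
      simp_rw [prod_indicator_eq]
      exact lintegral_indicator_one (MeasurableSet.biInter (Finset.range n).countable_toSet
        (fun j _ => hsetup.measX j measurableSet_Iio))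
    rw [h1]
    have h2 := hsetup.indep.measure_inter_preimage_eq_mul (S := (Finset.range n).image Sum.inl)
      (sets := fun _ => Iio c) (fun i _ => measurableSet_Iio)
    have h3 : (⋂ i ∈ (Finset.range n).image Sum.inl, Sum.elim X T i ⁻¹' Iio c) =
        ⋂ j ∈ Finset.range n, X j ⁻¹' Iio c := by
      ext ω
      simp only [Set.mem_iInter, Finset.mem_image, Finset.mem_range]
      constructor
      · intro h j hj
        exact h (Sum.inl j) ⟨j, hj, rfl⟩
      · rintro h i ⟨j, hj, rfl⟩
        exact h j hj
    have h4 : ∏ i ∈ (Finset.range n).image Sum.inl, μ (Sum.elim X T i ⁻¹' Iio c) =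
        ∏ j ∈ Finset.range n, μ (X j ⁻¹' Iio c) :=
      Finset.prod_image (fun a _ b _ hab => Sum.inl.inj hab)
    rw [h3, h4] at h2
    rw [h2]
    have h5 : ∀ j, μ (X j ⁻¹' Iio c) = (μ.map (X 0)) (Iio c) := by
      intro j
      rw [← Measure.map_apply (hsetup.measX j) measurableSet_Iio, hsetup.identX j]
    rw [Finset.prod_congr rfl (fun j _ => h5 j), Finset.prod_const, Finset.card_range]
  have hu2int : ∫⁻ ω, u2 ω ∂μ = ∫⁻ ω, (Ici c).indicator ENNReal.ofReal (X 0 ω) ∂μ := by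
    rw [hu2]
    rw [← lintegral_map (ENNReal.measurable_ofReal.indicator measurableSet_Ici) (hsetup.measX n),
      hsetup.identX n,
      lintegral_map (ENNReal.measurable_ofReal.indicator measurableSet_Ici) (hsetup.measX 0)]
  have hvint : ∫⁻ ω, v ω ∂μ = ENNReal.ofReal (auxF n t) := by
    have h1 : ∀ ω, v ω = ({ω : Ω | arrival T n ω ≤ t}).indicator (fun _ => (1:ℝ≥0∞)) ω := by
      intro ω
      simp only [hv]
      by_cases h : arrival T n ω ≤ t
      · rw [Set.indicator_of_mem (show arrival T n ω ∈ Iic t from h),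
          Set.indicator_of_mem (show ω ∈ {ω | arrival T n ω ≤ t} from h)]
      · rw [Set.indicator_of_notMem (show arrival T n ω ∉ Iic t from h),
          Set.indicator_of_notMem (show ω ∉ {ω | arrival T n ω ≤ t} from h)]
    rw [lintegral_congr h1]
    rw [show (∫⁻ a, ({ω : Ω | arrival T n ω ≤ t}).indicator (fun _ => (1:ℝ≥0∞)) a ∂μ)
      = μ {ω | arrival T n ω ≤ t} from lintegral_indicator_one hBmeas]
    exact arrival_cdf hsetup n t
  calc ∫⁻ ω in ((⋂ j ∈ Finset.range n, X j ⁻¹' Iio c) ∩ X n ⁻¹' Ici c) ∩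
        {ω | arrival T n ω ≤ t}, ENNReal.ofReal (X n ω) ∂μ
      = ∫⁻ ω, u1 ω * u2 ω * v ω ∂μ := by
        rw [← lintegral_indicator (hAmeas.inter hBmeas)]
        exact (lintegral_congr hpoint).symm
    _ = (∫⁻ ω, u1 ω * u2 ω ∂μ) * ∫⁻ ω, v ω ∂μ :=
        lintegral_mul_eq_lintegral_mul_lintegral_of_indepFun (hu1meas.mul hu2meas) hvmeas hindepUV
    _ = (∫⁻ ω, u1 ω ∂μ) * (∫⁻ ω, u2 ω ∂μ) * ∫⁻ ω, v ω ∂μ := by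
        have hmul : (∫⁻ ω, u1 ω * u2 ω ∂μ) = (∫⁻ ω, u1 ω ∂μ) * ∫⁻ ω, u2 ω ∂μ :=
          lintegral_mul_eq_lintegral_mul_lintegral_of_indepFun hu1meas hu2meas hindepU12
        rw [hmul]
    _ = ((μ.map (X 0)) (Iio c)) ^ n * (∫⁻ ω, (Ici c).indicator ENNReal.ofReal (X 0 ω) ∂μ) *
        ENNReal.ofReal (auxF n t) := by
        rw [hu1int, hu2int, hvint]

end Layer

section Tau

variable {c : ℝ}

lemma D_succ (X : ℕ → Ω → ℝ) (c : ℝ) (m : ℕ) :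
    {ω | tauC X c ω = m + 1} =
      (⋂ j ∈ Finset.range (m+1), X j ⁻¹' Iio c) ∩ X (m+1) ⁻¹' Ici c := by
  ext ω
  simp only [mem_setOf_eq, mem_inter_iff, Set.mem_iInter, mem_preimage, mem_Iio, mem_Ici,
    Finset.mem_range]
  constructor
  · intro h
    have hne : {n : ℕ | c ≤ X n ω}.Nonempty := by
      by_contra hne
      rw [Set.not_nonempty_iff_eq_empty] at hne
      have : tauC X c ω = 0 := by
        unfold tauC
        rw [hne, Nat.sInf_empty]
      omega
    constructor
    · intro j hj
      have hjl : j < sInf {n : ℕ | c ≤ X n ω} := by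
        rw [show sInf {n : ℕ | c ≤ X n ω} = m + 1 from h]
        exact hj
      have := Nat.notMem_of_lt_sInf hjl
      exact not_le.mp this
    · have := Nat.sInf_mem hne
      rw [show sInf {n : ℕ | c ≤ X n ω} = m + 1 from h] at this
      exact this
  · rintro ⟨hall, hn⟩
    apply le_antisymm
    · exact Nat.sInf_le hn
    · by_contra hlt
      push_neg at hlt
      have hne : {n : ℕ | c ≤ X n ω}.Nonempty := ⟨m+1, hn⟩
      have hmem := Nat.sInf_mem hne
      exact absurd hmem (not_le.mpr (hall _ hlt))

lemma D_zero (X : ℕ → Ω → ℝ) (c : ℝ) :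
    {ω | tauC X c ω = 0} =
      ((⋂ j ∈ Finset.range 0, X j ⁻¹' Iio c) ∩ X 0 ⁻¹' Ici c) ∪ ⋂ j, X j ⁻¹' Iio c := by
  ext ω
  constructor
  · intro h
    rcases Nat.sInf_eq_zero.mp h with h0 | hemp
    · exact Or.inl ⟨by simp, h0⟩
    · right
      rw [Set.mem_iInter]
      intro j
      have hj : ¬ c ≤ X j ω := by
        have : j ∉ {n : ℕ | c ≤ X n ω} := by rw [hemp]; exact fun h => h
        exact this
      exact not_le.mp hj
  · intro h
    apply Nat.sInf_eq_zero.mpr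
    rcases h with ⟨_, h0⟩ | hN
    · exact Or.inl h0
    · right
      rw [Set.eq_empty_iff_forall_notMem]
      intro j hj
      rw [Set.mem_iInter] at hN
      have : X j ω < c := hN j
      exact absurd (hj : c ≤ X j ω) (not_le.mpr this)

lemma meas_iInter_range (hsetup : Setup μ X T) (c : ℝ) (m : ℕ) :
    μ (⋂ j ∈ Finset.range m, X j ⁻¹' Iio c) = ((μ.map (X 0)) (Iio c)) ^ m := by
  have h2 := hsetup.indep.measure_inter_preimage_eq_mul (S := (Finset.range m).image Sum.inl)
    (sets := fun _ => Iio c) (fun i _ => measurableSet_Iio)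
  have h3 : (⋂ i ∈ (Finset.range m).image Sum.inl, Sum.elim X T i ⁻¹' Iio c) =
      ⋂ j ∈ Finset.range m, X j ⁻¹' Iio c := by
    ext ω
    simp only [Set.mem_iInter, Finset.mem_image, Finset.mem_range]
    constructor
    · intro h j hj
      exact h (Sum.inl j) ⟨j, hj, rfl⟩
    · rintro h i ⟨j, hj, rfl⟩
      exact h j hj
  have h4 : ∏ i ∈ (Finset.range m).image Sum.inl, μ (Sum.elim X T i ⁻¹' Iio c) =
      ∏ j ∈ Finset.range m, μ (X j ⁻¹' Iio c) :=
    Finset.prod_image (fun a _ b _ hab => Sum.inl.inj hab)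
  rw [h3, h4] at h2
  rw [h2]
  have h5 : ∀ j, μ (X j ⁻¹' Iio c) = (μ.map (X 0)) (Iio c) := by
    intro j
    rw [← Measure.map_apply (hsetup.measX j) measurableSet_Iio, hsetup.identX j]
  rw [Finset.prod_congr rfl (fun j _ => h5 j), Finset.prod_const, Finset.card_range]

lemma null_N (hsetup : Setup μ X T) (c : ℝ) (hpos : 0 < μ (X 0 ⁻¹' Ici c)) :
    μ (⋂ j, X j ⁻¹' Iio c) = 0 := by
  haveI := hsetup.prob
  haveI : IsProbabilityMeasure (μ.map (X 0)) :=
    Measure.isProbabilityMeasure_map (hsetup.measX 0).aemeasurable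
  set q : ℝ≥0∞ := (μ.map (X 0)) (Iio c) with hq
  have hqe : q = 1 - (μ.map (X 0)) (Ici c) := by
    rw [hq, ← compl_Ici, prob_compl_eq_one_sub measurableSet_Ici]
  have hppos : 0 < (μ.map (X 0)) (Ici c) := by
    rwa [Measure.map_apply (hsetup.measX 0) measurableSet_Ici]
  have hqlt : q < 1 := by
    rw [hqe]
    exact ENNReal.sub_lt_self ENNReal.one_ne_top one_ne_zero hppos.ne'
  have hbound : ∀ m : ℕ, μ (⋂ j, X j ⁻¹' Iio c) ≤ q ^ m := by
    intro m
    rw [← meas_iInter_range hsetup c m]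
    apply measure_mono
    intro ω hω
    rw [Set.mem_iInter₂]
    intro j _
    exact Set.mem_iInter.mp hω j
  have htend : Filter.Tendsto (fun m : ℕ => q ^ m) Filter.atTop (nhds 0) :=
    ENNReal.tendsto_pow_atTop_nhds_zero_of_lt_one hqlt
  have := ge_of_tendsto' htend hbound
  exact le_antisymm this zero_le

lemma measurable_D (hX : ∀ i, Measurable (X i)) (c : ℝ) (n : ℕ) :
    MeasurableSet {ω | tauC X c ω = n} := by
  have hA : ∀ m : ℕ, MeasurableSet ((⋂ j ∈ Finset.range m, X j ⁻¹' Iio c) ∩ X m ⁻¹' Ici c) := by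
    intro m
    exact (MeasurableSet.biInter (Finset.range m).countable_toSet
      (fun j _ => hX j measurableSet_Iio)).inter (hX m measurableSet_Ici)
  cases n with
  | zero =>
    rw [D_zero X c]
    exact (hA 0).union (MeasurableSet.iInter fun j => hX j measurableSet_Iio)
  | succ m =>
    rw [D_succ X c m]
    exact hA (m+1)

lemma measurable_stopReward (hsetup : Setup μ X T) (c t : ℝ) :
    Measurable (stopReward X T t (tauC X c)) := by
  intro s hs
  have hpre : stopReward X T t (tauC X c) ⁻¹' s =
      ⋃ n, ({ω | tauC X c ω = n} ∩
        (fun ω => if arrival T n ω ≤ t then X n ω else 0) ⁻¹' s) := by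
    ext ω
    simp only [mem_preimage, mem_iUnion, mem_inter_iff, mem_setOf_eq]
    constructor
    · intro h
      exact ⟨tauC X c ω, rfl, h⟩
    · rintro ⟨n, hn, h⟩
      have : stopReward X T t (tauC X c) ω = if arrival T n ω ≤ t then X n ω else 0 := by
        unfold stopReward
        rw [hn]
      rw [this]
      exact h
  rw [hpre]
  exact MeasurableSet.iUnion fun n => (measurable_D hsetup.measX c n).inter
    ((Measurable.ite (measurableSet_le (measurable_arrival hsetup.measT n) measurable_const)
      (hsetup.measX n) measurable_const) hs)

end Tau

end PPAux


open ProphetPoisson in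
open PPAux in
/-- for `t > 0` and `c ≥ 0` with `P(X ≥ c) > 0`,
`W_c(t) = (1 − e^{−t·P(X ≥ c)})·E(X | X ≥ c)`. -/
theorem Wval_eq_threshold_formula
    {Ω : Type*} [MeasurableSpace Ω] (μ : Measure Ω) (X T : ℕ → Ω → ℝ)
    (hsetup : Setup μ X T)
    (hXnn : ∀ i ω, 0 ≤ X i ω) (hXint : Integrable (X 0) μ)
    (hXne : μ {ω | X 0 ω = 0} < 1)
    (t : ℝ) (ht : 0 < t) (c : ℝ) (hc : 0 ≤ c)
    (hpos : 0 < μ {ω | c ≤ X 0 ω}) :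
    Wval μ X T c t =
      (1 - Real.exp (-(t * (μ {ω | c ≤ X 0 ω}).toReal))) *
        ((∫ ω in {ω | c ≤ X 0 ω}, X 0 ω ∂μ) / (μ {ω | c ≤ X 0 ω}).toReal) := by
  haveI := hsetup.prob
  haveI : IsProbabilityMeasure (μ.map (X 0)) :=
    Measure.isProbabilityMeasure_map (hsetup.measX 0).aemeasurable
  set p : ℝ≥0∞ := μ {ω | c ≤ X 0 ω} with hpdef
  set pr : ℝ := p.toReal with hprdef
  set q : ℝ≥0∞ := (μ.map (X 0)) (Iio c) with hqdef
  set I : ℝ≥0∞ := ∫⁻ ω, (Ici c).indicator ENNReal.ofReal (X 0 ω) ∂μ with hIdef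
  have hpre : {ω | c ≤ X 0 ω} = X 0 ⁻¹' Ici c := rfl
  have hpne_top : p ≠ ⊤ := (lt_of_le_of_lt prob_le_one ENNReal.one_lt_top).ne
  have hpr0 : 0 < pr := ENNReal.toReal_pos hpos.ne' hpne_top
  have hpr1 : pr ≤ 1 := by
    rw [hprdef]
    calc p.toReal ≤ (1 : ℝ≥0∞).toReal := ENNReal.toReal_mono ENNReal.one_ne_top prob_le_one
      _ = 1 := by simp
  have hpmap : (μ.map (X 0)) (Ici c) = p := by
    rw [Measure.map_apply (hsetup.measX 0) measurableSet_Ici, hpdef, hpre]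
  have hq1 : q = ENNReal.ofReal (1 - pr) := by
    rw [hqdef, ← compl_Ici, prob_compl_eq_one_sub measurableSet_Ici, hpmap,
      ENNReal.ofReal_sub _ (le_of_lt hpr0), ENNReal.ofReal_one, hprdef,
      ENNReal.ofReal_toReal hpne_top]
  -- measurability facts
  have hDmeas := fun n => measurable_D hsetup.measX c n
  have hBmeas : ∀ n : ℕ, MeasurableSet {ω | arrival T n ω ≤ t} := fun n =>
    measurableSet_le (measurable_arrival hsetup.measT n) measurable_const
  have hsrnn : ∀ ω, 0 ≤ stopReward X T t (tauC X c) ω := by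
    intro ω
    unfold stopReward
    split_ifs
    · exact hXnn _ ω
    · exact le_rfl
  -- the key lintegral computation
  have hlayer : ∀ n : ℕ, ∫⁻ ω in {ω | tauC X c ω = n},
      ENNReal.ofReal (stopReward X T t (tauC X c) ω) ∂μ
      = q ^ n * I * ENNReal.ofReal (auxF n t) := by
    intro n
    have step1 : ∫⁻ ω in {ω | tauC X c ω = n},
        ENNReal.ofReal (stopReward X T t (tauC X c) ω) ∂μ
        = ∫⁻ ω in {ω | arrival T n ω ≤ t} ∩ {ω | tauC X c ω = n},
            ENNReal.ofReal (X n ω) ∂μ := by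
      rw [setLIntegral_congr_fun (hDmeas n) ((fun ω hω => by
        have hτ : tauC X c ω = n := hω
        show ENNReal.ofReal (stopReward X T t (tauC X c) ω)
          = ({ω : Ω | arrival T n ω ≤ t}).indicator (fun ω => ENNReal.ofReal (X n ω)) ω
        unfold stopReward
        rw [hτ]
        by_cases h : arrival T n ω ≤ t
        · rw [if_pos h, Set.indicator_of_mem (show ω ∈ {ω | arrival T n ω ≤ t} from h)]
        · rw [if_neg h, Set.indicator_of_notMem (show ω ∉ {ω | arrival T n ω ≤ t} from h),
            ENNReal.ofReal_zero]))]
      rw [lintegral_indicator (hBmeas n), Measure.restrict_restrict (hBmeas n)]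
    rw [step1]
    cases n with
    | zero =>
      have hae : ({ω | arrival T 0 ω ≤ t} ∩ {ω | tauC X c ω = 0} : Set Ω) =ᵐ[μ]
          (((⋂ j ∈ Finset.range 0, X j ⁻¹' Iio c) ∩ X 0 ⁻¹' Ici c) ∩
            {ω | arrival T 0 ω ≤ t} : Set Ω) := by
        have hnull : μ (⋂ j, X j ⁻¹' Iio c) = 0 :=
          null_N hsetup c (by rw [← hpre]; exact hpos)
        rw [MeasureTheory.ae_eq_set]
        constructor
        · apply measure_mono_null _ hnull
          rintro ω ⟨⟨hB, hD⟩, hnot⟩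
          rw [D_zero X c] at hD
          rcases hD with hA | hN
          · exact absurd ⟨hA, hB⟩ hnot
          · exact hN
        · apply measure_mono_null _ hnull
          rintro ω ⟨⟨hA, hB⟩, hnot⟩
          exfalso
          apply hnot
          refine ⟨hB, ?_⟩
          rw [D_zero X c]
          exact Or.inl hA
      rw [setLIntegral_congr hae]
      have := layer_eq hsetup c t 0
      rw [this]
    | succ m =>
      rw [D_succ X c m, Set.inter_comm]
      exact layer_eq hsetup c t (m+1)
  have hcover : (⋃ n, {ω | tauC X c ω = n}) = (univ : Set Ω) :=
    eq_univ_of_forall fun ω => mem_iUnion.mpr ⟨tauC X c ω, rfl⟩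
  have hdisj : Pairwise (Function.onFun Disjoint fun n => {ω : Ω | tauC X c ω = n}) := by
    intro m n hmn
    rw [Function.onFun, Set.disjoint_left]
    intro ω h1 h2
    exact hmn ((h1 : tauC X c ω = m) ▸ (h2 : tauC X c ω = n) ▸ rfl)
  have hsplit : ∫⁻ ω, ENNReal.ofReal (stopReward X T t (tauC X c) ω) ∂μ
      = ∑' n : ℕ, q ^ n * I * ENNReal.ofReal (auxF n t) := by
    rw [← setLIntegral_univ, ← hcover, lintegral_iUnion hDmeas hdisj]
    exact tsum_congr hlayer
  -- sum the series
  have hsum : ∑' n : ℕ, q ^ n * I * ENNReal.ofReal (auxF n t)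
      = I * ENNReal.ofReal ((1 - Real.exp (-(t * pr))) / pr) := by
    have h1 : ∀ n : ℕ, q ^ n * I * ENNReal.ofReal (auxF n t)
        = I * ENNReal.ofReal ((1 - pr) ^ n * auxF n t) := by
      intro n
      rw [hq1, ← ENNReal.ofReal_pow (by linarith : (0:ℝ) ≤ 1 - pr),
        mul_comm (ENNReal.ofReal ((1 - pr) ^ n)) I, mul_assoc,
        ← ENNReal.ofReal_mul (pow_nonneg (by linarith : (0:ℝ) ≤ 1 - pr) n)]
    simp_rw [h1]
    rw [ENNReal.tsum_mul_left]
    congr 1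
    have hgeom : Summable (fun n : ℕ => (1 - pr) ^ n) :=
      summable_geometric_of_lt_one (by linarith) (by linarith)
    have hsummable : Summable (fun n : ℕ => (1 - pr) ^ n * auxF n t) := by
      apply Summable.of_nonneg_of_le
        (fun n => mul_nonneg (pow_nonneg (by linarith) n) (auxF_nonneg n t))
        (fun n => ?_) hgeom
      calc (1 - pr) ^ n * auxF n t ≤ (1 - pr) ^ n * 1 :=
            mul_le_mul_of_nonneg_left (auxF_le_one n t) (pow_nonneg (by linarith) n)
        _ = (1 - pr) ^ n := mul_one _
    rw [← ENNReal.ofReal_tsum_of_nonneg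
      (fun n => mul_nonneg (pow_nonneg (by linarith) n) (auxF_nonneg n t)) hsummable]
    congr 1
    exact series_eval hpr0 hpr1 ht.le
  -- compute I
  have hI : I = ENNReal.ofReal (∫ ω in {ω | c ≤ X 0 ω}, X 0 ω ∂μ) := by
    have h1 : ∀ ω, (Ici c).indicator ENNReal.ofReal (X 0 ω)
        = (X 0 ⁻¹' Ici c).indicator (fun ω => ENNReal.ofReal (X 0 ω)) ω := by
      intro ω
      by_cases h : c ≤ X 0 ω
      · rw [Set.indicator_of_mem (show X 0 ω ∈ Ici c from h),
          Set.indicator_of_mem (show ω ∈ X 0 ⁻¹' Ici c from h)]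
      · rw [Set.indicator_of_notMem (show X 0 ω ∉ Ici c from h),
          Set.indicator_of_notMem (show ω ∉ X 0 ⁻¹' Ici c from h)]
    rw [hIdef, lintegral_congr h1, lintegral_indicator (hsetup.measX 0 measurableSet_Ici)]
    rw [← ofReal_integral_eq_lintegral_ofReal (hXint.integrableOn)
      (ae_of_all _ (fun ω => hXnn 0 ω))]
    rfl
  -- final conversion
  have hintnn : 0 ≤ ∫ ω in {ω | c ≤ X 0 ω}, X 0 ω ∂μ :=
    integral_nonneg (fun ω => hXnn 0 ω)
  have hexple : Real.exp (-(t * pr)) ≤ 1 := by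
    rw [← Real.exp_zero]
    apply Real.exp_le_exp.mpr
    nlinarith
  have hfrac_nn : 0 ≤ (1 - Real.exp (-(t * pr))) / pr := by
    apply div_nonneg _ hpr0.le
    linarith
  rw [Wval, integral_eq_lintegral_of_nonneg_ae (ae_of_all _ hsrnn)
    (measurable_stopReward hsetup c t).aestronglyMeasurable, hsplit, hsum, hI,
    ← ENNReal.ofReal_mul hintnn, ENNReal.toReal_ofReal (mul_nonneg hintnn hfrac_nn)]
  field_simp
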